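/- Let (X,d) be a compact metric space. Define ϱ(a,b) for a,b ∈ X as the Gromov–Hausdorff-type distance between the pointed metric spaces (X,a) and (X,b). Then ϱ is a pseudometric on X satisfying ϱ ≤ d, and ϱ(a,b) = 0 if and only if there exists a surjective isometry Φ of X with Φ(a) = b. -/

import Mathlib

/-- The Gromov–Hausdorff-type distance ϱ(a,b) between the pointed metric spaces (X,a)
and (X,b): the infimum, over all pseudometrics p on the disjoint union X ⊔ X extending
the metric of X on each copy, of p_H(X₁,X₂) + p((a,1),(b,2)), where p_H is the
Hausdorff distance induced by p. -/
noncomputable def pointedGH {X : Type*} [MetricSpace X] (a b : X) : ℝ :=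
  sInf {r : ℝ | ∃ p : (X ⊕ X) → (X ⊕ X) → ℝ,
    (∀ u, p u u = 0) ∧ (∀ u v, 0 ≤ p u v) ∧ (∀ u v, p u v = p v u) ∧
    (∀ u v w, p u w ≤ p u v + p v w) ∧
    (∀ x y : X, p (Sum.inl x) (Sum.inl y) = dist x y) ∧
    (∀ x y : X, p (Sum.inr x) (Sum.inr y) = dist x y) ∧
    r = max (⨆ x : X, ⨅ y : X, p (Sum.inl x) (Sum.inr y))
            (⨆ y : X, ⨅ x : X, p (Sum.inl x) (Sum.inr y))
        + p (Sum.inl a) (Sum.inr b)}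

namespace PointedGHAux

variable {X : Type*} [MetricSpace X]

/-- Admissibility of a candidate pseudometric on `X ⊕ X`. -/
def IsAdm (p : (X ⊕ X) → (X ⊕ X) → ℝ) : Prop :=
  (∀ u, p u u = 0) ∧ (∀ u v, 0 ≤ p u v) ∧ (∀ u v, p u v = p v u) ∧
  (∀ u v w, p u w ≤ p u v + p v w) ∧
  (∀ x y : X, p (Sum.inl x) (Sum.inl y) = dist x y) ∧
  (∀ x y : X, p (Sum.inr x) (Sum.inr y) = dist x y)

noncomputable def S1 (p : (X ⊕ X) → (X ⊕ X) → ℝ) : ℝ :=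
  ⨆ x : X, ⨅ y : X, p (Sum.inl x) (Sum.inr y)

noncomputable def S2 (p : (X ⊕ X) → (X ⊕ X) → ℝ) : ℝ :=
  ⨆ y : X, ⨅ x : X, p (Sum.inl x) (Sum.inr y)

def ghSet (a b : X) : Set ℝ :=
  {r | ∃ p : (X ⊕ X) → (X ⊕ X) → ℝ, IsAdm p ∧
    r = max (S1 p) (S2 p) + p (Sum.inl a) (Sum.inr b)}

theorem pointedGH_eq (a b : X) : pointedGH a b = sInf (ghSet a b) := by
  unfold pointedGH ghSet IsAdm S1 S2
  congr 1
  ext r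
  constructor
  · rintro ⟨p, h1, h2, h3, h4, h5, h6, h7⟩; exact ⟨p, ⟨h1, h2, h3, h4, h5, h6⟩, h7⟩
  · rintro ⟨p, ⟨h1, h2, h3, h4, h5, h6⟩, h7⟩; exact ⟨p, h1, h2, h3, h4, h5, h6, h7⟩

theorem bddBelow_inner {ι : Type*} (g : ι → ℝ) (hg : ∀ y, 0 ≤ g y) :
    BddBelow (Set.range g) :=
  ⟨0, by rintro _ ⟨y, rfl⟩; exact hg y⟩

theorem S1_nonneg {p : (X ⊕ X) → (X ⊕ X) → ℝ} (hp : IsAdm p) : 0 ≤ S1 p :=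
  Real.iSup_nonneg fun _ => Real.iInf_nonneg fun _ => hp.2.1 _ _

theorem S2_nonneg {p : (X ⊕ X) → (X ⊕ X) → ℝ} (hp : IsAdm p) : 0 ≤ S2 p :=
  Real.iSup_nonneg fun _ => Real.iInf_nonneg fun _ => hp.2.1 _ _

theorem ghSet_nonneg {a b : X} {r : ℝ} (hr : r ∈ ghSet a b) : 0 ≤ r := by
  obtain ⟨q, hq, rfl⟩ := hr
  have h1 := S1_nonneg hq
  have h2 := hq.2.1 (Sum.inl a) (Sum.inr b)
  have h3 : (0:ℝ) ≤ max (S1 q) (S2 q) := le_max_of_le_left h1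
  linarith

theorem ghSet_bddBelow (a b : X) : BddBelow (ghSet a b) :=
  ⟨0, fun _ hr => ghSet_nonneg hr⟩

variable [Nonempty X]

/-- The admissible function coming from an isometric equivalence. -/
theorem isom_mem (Φ : X ≃ᵢ X) (a b : X) : dist (Φ a) b ∈ ghSet a b := by
  refine ⟨fun u v => dist (Sum.elim (⇑Φ) id u) (Sum.elim (⇑Φ) id v), ?_, ?_⟩
  · refine ⟨fun u => dist_self _, fun u v => dist_nonneg, fun u v => dist_comm _ _,
      fun u v w => dist_triangle _ _ _, fun x y => ?_, fun x y => by simp⟩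
    simp [Φ.isometry.dist_eq]
  · have hS1 : S1 (fun u v => dist (Sum.elim (⇑Φ) id u) (Sum.elim (⇑Φ) id v)) = 0 := by
      unfold S1
      have : ∀ x : X, (⨅ y : X, dist (Φ x) y) = 0 := by
        intro x
        apply le_antisymm
        · simpa using ciInf_le (bddBelow_inner (fun y : X => dist (Φ x) y) fun y => dist_nonneg) (Φ x)
        · exact Real.iInf_nonneg fun y => dist_nonneg
      simp only [Sum.elim_inl, Sum.elim_inr, id_eq, this, ciSup_const]
    have hS2 : S2 (fun u v => dist (Sum.elim (⇑Φ) id u) (Sum.elim (⇑Φ) id v)) = 0 := by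
      unfold S2
      have : ∀ y : X, (⨅ x : X, dist (Φ x) y) = 0 := by
        intro y
        apply le_antisymm
        · have := ciInf_le (bddBelow_inner (fun x : X => dist (Φ x) y)
            fun x => dist_nonneg) (Φ.symm y)
          simpa using this
        · exact Real.iInf_nonneg fun x => dist_nonneg
      simp only [Sum.elim_inl, Sum.elim_inr, id_eq, this, ciSup_const]
    simp [hS1, hS2]

theorem pointedGH_le_dist (a b : X) : pointedGH a b ≤ dist a b := by
  rw [pointedGH_eq]
  have := isom_mem (IsometryEquiv.refl X) a b
  exact csInf_le (ghSet_bddBelow a b) this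

theorem pointedGH_nonneg (a b : X) : 0 ≤ pointedGH a b := by
  rw [pointedGH_eq]
  exact le_csInf ⟨_, isom_mem (IsometryEquiv.refl X) a b⟩ fun r hr => ghSet_nonneg hr

theorem pointedGH_self (a : X) : pointedGH a a = 0 :=
  le_antisymm (by simpa using pointedGH_le_dist a a) (pointedGH_nonneg a a)

/-- Symmetry: the defining sets coincide. -/
theorem ghSet_symm (a b : X) : ghSet a b = ghSet b a := by
  have key : ∀ a b : X, ghSet a b ⊆ ghSet b a := by
    intro a b r hr
    obtain ⟨p, hp, rfl⟩ := hr
    obtain ⟨hp0, hpn, hps, hpt, hpl, hpr⟩ := hp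
    refine ⟨fun u v => p (u.swap) (v.swap), ⟨fun u => hp0 _, fun u v => hpn _ _,
      fun u v => hps _ _, fun u v w => hpt _ _ _, fun x y => hpr x y, fun x y => hpl x y⟩, ?_⟩
    have e1 : S1 (fun u v => p u.swap v.swap) = S2 p := by
      unfold S1 S2
      congr 1; ext x; congr 1; ext y
      simp [Sum.swap, hps (Sum.inr x) (Sum.inl y)]
    have e2 : S2 (fun u v => p u.swap v.swap) = S1 p := by
      unfold S1 S2
      congr 1; ext y; congr 1; ext x
      simp [Sum.swap, hps (Sum.inr x) (Sum.inl y)]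
    rw [e1, e2, max_comm]
    simp [Sum.swap, hps (Sum.inr b) (Sum.inl a)]
  exact le_antisymm (key a b) (key b a)

theorem pointedGH_symm (a b : X) : pointedGH a b = pointedGH b a := by
  rw [pointedGH_eq, pointedGH_eq, ghSet_symm]


section compactPart

variable [CompactSpace X]

theorem exists_bound : ∃ C : ℝ, ∀ x y : X, dist x y ≤ C := by
  obtain ⟨C, hC⟩ := Metric.isBounded_iff.mp (isCompact_univ (X := X)).isBounded
  exact ⟨C, fun x y => hC (Set.mem_univ x) (Set.mem_univ y)⟩

theorem bddAbove_inf1 {p : (X ⊕ X) → (X ⊕ X) → ℝ} (hp : IsAdm p) :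
    BddAbove (Set.range fun x : X => ⨅ y : X, p (Sum.inl x) (Sum.inr y)) := by
  obtain ⟨C, hC⟩ := exists_bound (X := X)
  obtain ⟨x₀⟩ := (inferInstance : Nonempty X)
  refine ⟨C + p (Sum.inl x₀) (Sum.inr x₀), ?_⟩
  rintro _ ⟨x, rfl⟩
  calc (⨅ y : X, p (Sum.inl x) (Sum.inr y))
      ≤ p (Sum.inl x) (Sum.inr x₀) :=
        ciInf_le (bddBelow_inner (fun y : X => p (Sum.inl x) (Sum.inr y))
          fun y => hp.2.1 _ _) x₀
    _ ≤ p (Sum.inl x) (Sum.inl x₀) + p (Sum.inl x₀) (Sum.inr x₀) := hp.2.2.2.1 _ _ _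
    _ ≤ C + p (Sum.inl x₀) (Sum.inr x₀) := by
        rw [hp.2.2.2.2.1]; linarith [hC x x₀]

theorem bddAbove_inf2 {p : (X ⊕ X) → (X ⊕ X) → ℝ} (hp : IsAdm p) :
    BddAbove (Set.range fun y : X => ⨅ x : X, p (Sum.inl x) (Sum.inr y)) := by
  obtain ⟨C, hC⟩ := exists_bound (X := X)
  obtain ⟨x₀⟩ := (inferInstance : Nonempty X)
  refine ⟨p (Sum.inl x₀) (Sum.inr x₀) + C, ?_⟩
  rintro _ ⟨y, rfl⟩
  calc (⨅ x : X, p (Sum.inl x) (Sum.inr y))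
      ≤ p (Sum.inl x₀) (Sum.inr y) :=
        ciInf_le (bddBelow_inner (fun x : X => p (Sum.inl x) (Sum.inr y))
          fun x => hp.2.1 _ _) x₀
    _ ≤ p (Sum.inl x₀) (Sum.inr x₀) + p (Sum.inr x₀) (Sum.inr y) := hp.2.2.2.1 _ _ _
    _ ≤ p (Sum.inl x₀) (Sum.inr x₀) + C := by
        rw [hp.2.2.2.2.2]; linarith [hC x₀ y]

/-- Gluing of two admissible functions along the middle copy. -/
noncomputable def gm (p q : (X ⊕ X) → (X ⊕ X) → ℝ) (x z : X) : ℝ :=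
  ⨅ y : X, (p (Sum.inl x) (Sum.inr y) + q (Sum.inl y) (Sum.inr z))

noncomputable def glue (m : X → X → ℝ) : (X ⊕ X) → (X ⊕ X) → ℝ
  | Sum.inl x, Sum.inl y => dist x y
  | Sum.inr x, Sum.inr y => dist x y
  | Sum.inl x, Sum.inr y => m x y
  | Sum.inr y, Sum.inl x => m x y

theorem ghSet_triangle {a b c : X} {r s : ℝ} (hr : r ∈ ghSet a b) (hs : s ∈ ghSet b c) :
    ∃ t ∈ ghSet a c, t ≤ r + s := by
  obtain ⟨p, hp, rfl⟩ := hr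
  obtain ⟨q, hq, rfl⟩ := hs
  obtain ⟨p0, pn, psym, ptri, pl, pr⟩ := id hp
  obtain ⟨q0, qn, qsym, qtri, ql, qr⟩ := id hq
  set m : X → X → ℝ := gm p q with hm
  have mBddB : ∀ x z : X, BddBelow (Set.range fun y : X =>
      p (Sum.inl x) (Sum.inr y) + q (Sum.inl y) (Sum.inr z)) := fun x z =>
    bddBelow_inner _ fun y => add_nonneg (pn _ _) (qn _ _)
  have mle : ∀ x z y : X, m x z ≤ p (Sum.inl x) (Sum.inr y) + q (Sum.inl y) (Sum.inr z) :=
    fun x z y => ciInf_le (mBddB x z) y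
  have mnon : ∀ x z : X, 0 ≤ m x z := fun x z =>
    Real.iInf_nonneg fun y => add_nonneg (pn _ _) (qn _ _)
  have mBdd1 : ∀ x : X, BddBelow (Set.range fun z : X => m x z) := fun x =>
    bddBelow_inner _ fun z => mnon x z
  have mBdd2 : ∀ z : X, BddBelow (Set.range fun x : X => m x z) := fun z =>
    bddBelow_inner _ fun x => mnon x z
  have mA : ∀ x x' z : X, m x z ≤ dist x x' + m x' z := by
    intro x x' z
    have step : ∀ y : X, m x z - dist x x' ≤
        p (Sum.inl x') (Sum.inr y) + q (Sum.inl y) (Sum.inr z) := by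
      intro y
      have h1 := mle x z y
      have h2 := ptri (Sum.inl x) (Sum.inl x') (Sum.inr y)
      have h3 := pl x x'
      linarith
    have := le_ciInf step
    rw [hm] at this ⊢
    unfold gm at this ⊢
    linarith
  have mB : ∀ x z z' : X, m x z ≤ m x z' + dist z' z := by
    intro x z z'
    have step : ∀ y : X, m x z - dist z' z ≤
        p (Sum.inl x) (Sum.inr y) + q (Sum.inl y) (Sum.inr z') := by
      intro y
      have h1 := mle x z y
      have h2 := qtri (Sum.inl y) (Sum.inr z') (Sum.inr z)
      have h3 := qr z' z
      linarith
    have := le_ciInf step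
    rw [hm] at this ⊢
    unfold gm at this ⊢
    linarith
  have mC : ∀ x x' z : X, dist x x' ≤ m x z + m x' z := by
    intro x x' z
    have key : ∀ y y' : X, dist x x' ≤
        (p (Sum.inl x) (Sum.inr y) + q (Sum.inl y) (Sum.inr z)) +
        (p (Sum.inl x') (Sum.inr y') + q (Sum.inl y') (Sum.inr z)) := by
      intro y y'
      have h1 := ptri (Sum.inl x) (Sum.inr y) (Sum.inl x')
      have h2 := ptri (Sum.inr y) (Sum.inr y') (Sum.inl x')
      have h3 := qtri (Sum.inl y) (Sum.inr z) (Sum.inl y')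
      have e1 := pl x x'
      have e2 := pr y y'
      have e3 := ql y y'
      have s1 := psym (Sum.inr y') (Sum.inl x')
      have s2 := qsym (Sum.inr z) (Sum.inl y')
      linarith
    have step : ∀ y : X, dist x x' -
        (p (Sum.inl x) (Sum.inr y) + q (Sum.inl y) (Sum.inr z)) ≤ m x' z := by
      intro y
      exact le_ciInf fun y' => by linarith [key y y']
    have : dist x x' - m x' z ≤ m x z := le_ciInf fun y => by linarith [step y]
    linarith
  have mD : ∀ x z z' : X, dist z z' ≤ m x z + m x z' := by
    intro x z z'
    have key : ∀ y y' : X, dist z z' ≤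
        (p (Sum.inl x) (Sum.inr y) + q (Sum.inl y) (Sum.inr z)) +
        (p (Sum.inl x) (Sum.inr y') + q (Sum.inl y') (Sum.inr z')) := by
      intro y y'
      have h1 := qtri (Sum.inr z) (Sum.inl y) (Sum.inr z')
      have h2 := qtri (Sum.inl y) (Sum.inl y') (Sum.inr z')
      have h3 := ptri (Sum.inr y) (Sum.inl x) (Sum.inr y')
      have e2 := pr y y'
      have e3 := ql y y'
      have s1 := qsym (Sum.inr z) (Sum.inl y)
      have s2 := psym (Sum.inr y) (Sum.inl x)
      have e4 := qr z z'
      have h4 := qtri (Sum.inr z) (Sum.inl y) (Sum.inr z')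
      have h5 : dist y y' = p (Sum.inr y) (Sum.inr y') := (pr y y').symm
      linarith
    have step : ∀ y : X, dist z z' -
        (p (Sum.inl x) (Sum.inr y) + q (Sum.inl y) (Sum.inr z)) ≤ m x z' := by
      intro y
      exact le_ciInf fun y' => by linarith [key y y']
    have : dist z z' - m x z' ≤ m x z := le_ciInf fun y => by linarith [step y]
    linarith
  have hadm : IsAdm (glue m) := by
    refine ⟨?_, ?_, ?_, ?_, fun x y => rfl, fun x y => rfl⟩
    · rintro (x | x) <;> simp [glue]
    · rintro (x | x) (y | y) <;> first | exact dist_nonneg | exact mnon _ _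
    · rintro (x | x) (y | y) <;> simp [glue, dist_comm]
    · rintro (u | u) (v | v) (w | w)
      · exact dist_triangle u v w
      · exact mA u v w
      · exact mC u w v
      · exact mB u w v
      · show m w u ≤ m v u + dist v w
        linarith [mA w v u, dist_comm w v]
      · exact mD v u w
      · show m w u ≤ dist u v + m w v
        linarith [mB w u v, dist_comm v u]
      · exact dist_triangle u v w
  have hS1t : S1 (glue m) ≤ S1 p + S1 q := by
    apply ciSup_le
    intro x
    show (⨅ z : X, m x z) ≤ S1 p + S1 q
    have step1 : ∀ y : X, (⨅ z : X, m x z) ≤ p (Sum.inl x) (Sum.inr y) + S1 q := by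
      intro y
      have h1 : ∀ z : X, (⨅ z' : X, m x z') - p (Sum.inl x) (Sum.inr y) ≤
          q (Sum.inl y) (Sum.inr z) := fun z => by
        linarith [ciInf_le (mBdd1 x) z, mle x z y]
      have h2 := le_ciInf h1
      have h3 : (⨅ z : X, q (Sum.inl y) (Sum.inr z)) ≤ S1 q := le_ciSup (bddAbove_inf1 hq) y
      linarith
    have h4 : (⨅ z : X, m x z) - S1 q ≤ ⨅ y : X, p (Sum.inl x) (Sum.inr y) :=
      le_ciInf fun y => by linarith [step1 y]
    have h5 : (⨅ y : X, p (Sum.inl x) (Sum.inr y)) ≤ S1 p := le_ciSup (bddAbove_inf1 hp) x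
    linarith
  have hS2t : S2 (glue m) ≤ S2 p + S2 q := by
    apply ciSup_le
    intro z
    show (⨅ x : X, m x z) ≤ S2 p + S2 q
    have step1 : ∀ y : X, (⨅ x : X, m x z) ≤ S2 p + q (Sum.inl y) (Sum.inr z) := by
      intro y
      have h1 : ∀ x : X, (⨅ x' : X, m x' z) - q (Sum.inl y) (Sum.inr z) ≤
          p (Sum.inl x) (Sum.inr y) := fun x => by
        linarith [ciInf_le (mBdd2 z) x, mle x z y]
      have h2 := le_ciInf h1
      have h3 : (⨅ x : X, p (Sum.inl x) (Sum.inr y)) ≤ S2 p := le_ciSup (bddAbove_inf2 hp) y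
      linarith
    have h4 : (⨅ x : X, m x z) - S2 p ≤ ⨅ y : X, q (Sum.inl y) (Sum.inr z) :=
      le_ciInf fun y => by linarith [step1 y]
    have h5 : (⨅ y : X, q (Sum.inl y) (Sum.inr z)) ≤ S2 q := le_ciSup (bddAbove_inf2 hq) z
    linarith
  refine ⟨max (S1 (glue m)) (S2 (glue m)) + glue m (Sum.inl a) (Sum.inr c),
    ⟨glue m, hadm, rfl⟩, ?_⟩
  have hend : glue m (Sum.inl a) (Sum.inr c) ≤
      p (Sum.inl a) (Sum.inr b) + q (Sum.inl b) (Sum.inr c) := mle a c b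
  have hmax : max (S1 (glue m)) (S2 (glue m)) ≤
      max (S1 p) (S2 p) + max (S1 q) (S2 q) := by
    apply max_le
    · exact hS1t.trans (add_le_add (le_max_left _ _) (le_max_left _ _))
    · exact hS2t.trans (add_le_add (le_max_right _ _) (le_max_right _ _))
  linarith

theorem pointedGH_triangle (a b c : X) :
    pointedGH a c ≤ pointedGH a b + pointedGH b c := by
  rw [pointedGH_eq, pointedGH_eq, pointedGH_eq]
  have ne1 : (ghSet a b).Nonempty := ⟨_, isom_mem (IsometryEquiv.refl X) a b⟩
  have ne2 : (ghSet b c).Nonempty := ⟨_, isom_mem (IsometryEquiv.refl X) b c⟩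
  have key : ∀ r ∈ ghSet a b, ∀ s ∈ ghSet b c, sInf (ghSet a c) ≤ r + s := by
    intro r hr s hs
    obtain ⟨t, ht, htle⟩ := ghSet_triangle hr hs
    exact (csInf_le (ghSet_bddBelow a c) ht).trans htle
  have h1 : ∀ s ∈ ghSet b c, sInf (ghSet a c) - s ≤ sInf (ghSet a b) := fun s hs =>
    le_csInf ne1 fun r hr => by linarith [key r hr s hs]
  have h2 : sInf (ghSet a c) - sInf (ghSet a b) ≤ sInf (ghSet b c) :=
    le_csInf ne2 fun s hs => by linarith [h1 s hs]
  linarith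

theorem exists_approx {a b : X} (h : pointedGH a b = 0) {ε : ℝ} (hε : 0 < ε) :
    ∃ f : X → X, (∀ x y, |dist (f x) (f y) - dist x y| ≤ 2 * ε) ∧ dist (f a) b ≤ 2 * ε := by
  rw [pointedGH_eq] at h
  have ne : (ghSet a b).Nonempty := ⟨_, isom_mem (IsometryEquiv.refl X) a b⟩
  have hlt : sInf (ghSet a b) < ε := by rw [h]; exact hε
  obtain ⟨r, hr, hrε⟩ := exists_lt_of_csInf_lt ne hlt
  obtain ⟨p, hp, rfl⟩ := hr
  obtain ⟨p0, pn, psym, ptri, pl, pr⟩ := id hp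
  have hSn1 := S1_nonneg hp
  have hSn2 := S2_nonneg hp
  have hmax0 : (0:ℝ) ≤ max (S1 p) (S2 p) := le_max_of_le_left hSn1
  have hpab : p (Sum.inl a) (Sum.inr b) < ε := by linarith
  have hS1 : S1 p < ε := by
    have := le_max_left (S1 p) (S2 p)
    linarith [pn (Sum.inl a) (Sum.inr b)]
  have hx : ∀ x : X, (⨅ y : X, p (Sum.inl x) (Sum.inr y)) < ε := fun x =>
    lt_of_le_of_lt (le_ciSup (bddAbove_inf1 hp) x) hS1
  choose f hf using fun x => exists_lt_of_ciInf_lt (hx x)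
  refine ⟨f, fun x y => ?_, ?_⟩
  · rw [abs_le]
    constructor
    · -- dist x y - 2ε ≤ dist (f x) (f y)
      have t3 := ptri (Sum.inl x) (Sum.inr (f x)) (Sum.inl y)
      have t4 := ptri (Sum.inr (f x)) (Sum.inr (f y)) (Sum.inl y)
      have s2 := psym (Sum.inr (f y)) (Sum.inl y)
      have e1 := pr (f x) (f y)
      have e2 := pl x y
      have A := hf x
      have B := hf y
      linarith
    · have t1 := ptri (Sum.inr (f x)) (Sum.inl x) (Sum.inr (f y))
      have t2 := ptri (Sum.inl x) (Sum.inl y) (Sum.inr (f y))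
      have s1 := psym (Sum.inr (f x)) (Sum.inl x)
      have e1 := pr (f x) (f y)
      have e2 := pl x y
      have A := hf x
      have B := hf y
      linarith
  · have t1 := ptri (Sum.inr (f a)) (Sum.inl a) (Sum.inr b)
    have s1 := psym (Sum.inr (f a)) (Sum.inl a)
    have e1 := pr (f a) b
    have A := hf a
    linarith

theorem surj_of_isometry {f : X → X} (hf : Isometry f) : Function.Surjective f := by
  by_contra hns
  rw [Function.Surjective] at hns
  push_neg at hns
  obtain ⟨x, hx⟩ := hns
  have hrange : IsClosed (Set.range f) := (isCompact_range hf.continuous).isClosed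
  have hne : (Set.range f).Nonempty := Set.range_nonempty f
  have hx' : x ∉ Set.range f := by rintro ⟨y, rfl⟩; exact hx y rfl
  have hpos : 0 < Metric.infDist x (Set.range f) :=
    (hrange.notMem_iff_infDist_pos hne).mp hx'
  set ε := Metric.infDist x (Set.range f) with hε
  have hiter : ∀ k : ℕ, Isometry (f^[k]) := by
    intro k
    induction k with
    | zero => simpa using isometry_id
    | succ n ih => rw [Function.iterate_succ]; exact ih.comp hf
  have key : ∀ m n : ℕ, m < n → ε ≤ dist (f^[m] x) (f^[n] x) := by
    intro m n hmn
    have hsplit : f^[n] x = f^[m] (f^[n - m] x) := by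
      rw [← Function.iterate_add_apply, Nat.add_sub_cancel' hmn.le]
    rw [hsplit, (hiter m).dist_eq]
    have hmem : f^[n - m] x ∈ Set.range f := by
      have h1 : n - m = (n - m - 1) + 1 := by omega
      rw [h1, Function.iterate_succ_apply']
      exact ⟨_, rfl⟩
    exact Metric.infDist_le_dist_of_mem hmem
  obtain ⟨y, -, φ, hφ, hconv⟩ :=
    isCompact_univ.tendsto_subseq (x := fun n => f^[n] x) fun n => Set.mem_univ _
  have hc : CauchySeq fun n => f^[φ n] x := hconv.cauchySeq
  obtain ⟨N, hN⟩ := Metric.cauchySeq_iff.mp hc ε hpos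
  have h1 := hN N le_rfl (N + 1) (Nat.le_succ N)
  have h2 := key (φ N) (φ (N + 1)) (hφ (Nat.lt_succ_self N))
  linarith

theorem exists_isom {a b : X} (h : pointedGH a b = 0) : ∃ Φ : X ≃ᵢ X, Φ a = b := by
  have H : ∀ n : ℕ, ∃ f : X → X,
      (∀ x y, |dist (f x) (f y) - dist x y| ≤ 2 / (n + 1)) ∧ dist (f a) b ≤ 2 / (n + 1) := by
    intro n
    obtain ⟨f, h1, h2⟩ := exists_approx h (ε := 1 / (n + 1)) (by positivity)
    have he : 2 * (1 / ((n : ℝ) + 1)) = 2 / (n + 1) := by ring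
    exact ⟨f, fun x y => by rw [← he]; exact h1 x y, by rw [← he]; exact h2⟩
  choose f hf1 hf2 using H
  set F : Ultrafilter ℕ := Ultrafilter.of Filter.atTop with hFdef
  have hF : (F : Filter ℕ) ≤ Filter.atTop := Ultrafilter.of_le _
  have hlim : ∀ x : X, ∃ y : X, Filter.Tendsto (fun n => f n x) F (nhds y) := by
    intro x
    obtain ⟨y, -, hy⟩ := isCompact_univ.ultrafilter_le_nhds (F.map fun n => f n x)
      (by simp)
    refine ⟨y, ?_⟩
    rw [Ultrafilter.coe_map] at hy
    exact hy
  choose Φ₀ hΦ₀ using hlim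
  have hzero : Filter.Tendsto (fun n : ℕ => 2 / ((n : ℝ) + 1)) Filter.atTop (nhds 0) := by
    have h1 := (tendsto_const_div_atTop_nhds_zero_nat (2:ℝ)).comp (Filter.tendsto_add_atTop_nat 1)
    have h2 : ((fun n : ℕ => (2:ℝ) / n) ∘ fun a => a + 1) = fun n : ℕ => 2 / ((n:ℝ) + 1) := by
      funext n
      simp only [Function.comp_apply]
      push_cast
      ring
    rwa [h2] at h1
  have hdist : ∀ x y : X, dist (Φ₀ x) (Φ₀ y) = dist x y := by
    intro x y
    have l1 : Filter.Tendsto (fun n => dist (f n x) (f n y)) F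
        (nhds (dist (Φ₀ x) (Φ₀ y))) := (hΦ₀ x).dist (hΦ₀ y)
    have l2 : Filter.Tendsto (fun n => dist (f n x) (f n y)) Filter.atTop
        (nhds (dist x y)) := by
      have hsq : Filter.Tendsto (fun n => dist (f n x) (f n y) - dist x y)
          Filter.atTop (nhds 0) :=
        squeeze_zero_norm (fun n => by
          simpa [Real.norm_eq_abs] using hf1 n x y) hzero
      have := hsq.add_const (dist x y)
      simpa using this
    exact tendsto_nhds_unique l1 (l2.mono_left hF)
  have hΦa : Φ₀ a = b := by
    have l1 := hΦ₀ a
    have l2 : Filter.Tendsto (fun n => f n a) Filter.atTop (nhds b) := by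
      rw [tendsto_iff_dist_tendsto_zero]
      exact squeeze_zero (fun n => dist_nonneg) (fun n => hf2 n) hzero
    exact tendsto_nhds_unique l1 (l2.mono_left hF)
  have hiso : Isometry Φ₀ := Isometry.of_dist_eq hdist
  have hsurj : Function.Surjective Φ₀ := surj_of_isometry hiso
  exact ⟨{ toEquiv := Equiv.ofBijective Φ₀ ⟨hiso.injective, hsurj⟩,
           isometry_toFun := hiso }, hΦa⟩

theorem zero_iff (a b : X) : pointedGH a b = 0 ↔ ∃ Φ : X ≃ᵢ X, Φ a = b := by
  constructor
  · exact exists_isom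
  · rintro ⟨Φ, hΦ⟩
    apply le_antisymm
    · rw [pointedGH_eq]
      have := isom_mem Φ a b
      rw [hΦ, dist_self] at this
      exact csInf_le (ghSet_bddBelow a b) this
    · exact pointedGH_nonneg a b

end compactPart

end PointedGHAux

/-- For a compact metric space X, ϱ is a pseudometric on X satisfying
ϱ ≤ d, and ϱ(a,b) = 0 if and only if some surjective isometry of X sends a to b. -/
theorem pointedGH_pseudometric {X : Type*} [MetricSpace X] [CompactSpace X]
    [Nonempty X] :
    (∀ a : X, pointedGH a a = 0) ∧
    (∀ a b : X, 0 ≤ pointedGH a b) ∧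
    (∀ a b : X, pointedGH a b = pointedGH b a) ∧
    (∀ a b c : X, pointedGH a c ≤ pointedGH a b + pointedGH b c) ∧
    (∀ a b : X, pointedGH a b ≤ dist a b) ∧
    (∀ a b : X, pointedGH a b = 0 ↔ ∃ Φ : X ≃ᵢ X, Φ a = b) := by
  refine ⟨PointedGHAux.pointedGH_self, PointedGHAux.pointedGH_nonneg,
    PointedGHAux.pointedGH_symm, ?_, PointedGHAux.pointedGH_le_dist, ?_⟩
  · exact PointedGHAux.pointedGH_triangle
  · exact PointedGHAux.zero_iff
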